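/- For all sufficiently large n, M(n,2,3,2,3) ≥ 0.24 · C(n,3); that is, every 2-coloring of the edges of K^3_n contains a monochromatic 2-tight component with at least 0.24 · C(n,3) edges. -/

import Mathlib

open Finset

/-- The `s`-shadow of a hypergraph `H`: all `s`-element vertex sets contained in
some edge of `H`. -/
def hShadow {V : Type*} [DecidableEq V] (s : ℕ) (H : Finset (Finset V)) :
    Finset (Finset V) :=
  H.biUnion fun e => e.powersetCard s

/-- One step of `t`-tight connectivity: both `a` and `b` are edges of `H` and they
share at least `t` vertices. -/
def TightStep {V : Type*} [DecidableEq V] (t : ℕ) (H : Finset (Finset V))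
    (a b : Finset V) : Prop :=
  a ∈ H ∧ b ∈ H ∧ t ≤ (a ∩ b).card

/-- Two edges lie in the same `t`-tight component iff they are joined by a chain of
edges, consecutive ones sharing at least `t` vertices. -/
def TightConn {V : Type*} [DecidableEq V] (t : ℕ) (H : Finset (Finset V)) :
    Finset V → Finset V → Prop :=
  Relation.ReflTransGen (TightStep t H)

open scoped Classical in
/-- The `t`-tight component of the edge `e` in the hypergraph `H`. -/
noncomputable def tightComponent {V : Type*} [DecidableEq V] (t : ℕ)
    (H : Finset (Finset V)) (e : Finset V) : Finset (Finset V) :=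
  H.filter fun f => TightConn t H e f

/-- The `k`-uniform hypergraph `H i` of edges of `K^k_n` having color `i` under the
coloring `c`. -/
def colorClass (n r k : ℕ) (c : Finset (Fin n) → Fin r) (i : Fin r) :
    Finset (Finset (Fin n)) :=
  (Finset.univ.powersetCard k).filter fun e => c e = i

/-- `M(n,r,k,t,s;c)`: the largest number of vertex `s`-sets contained in the edges of
a monochromatic `t`-tight component of the `r`-coloring `c` of `K^k_n`. -/
noncomputable def Mcol (n r k t s : ℕ) (c : Finset (Fin n) → Fin r) : ℕ :=
  Finset.univ.sup fun i : Fin r =>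
    (colorClass n r k c i).sup fun e =>
      (hShadow s (tightComponent t (colorClass n r k c i) e)).card

/-- `M(n,r,k,t,s)`: the minimum of `M(n,r,k,t,s;c)` over all `r`-colorings `c` of
`K^k_n`. -/
noncomputable def Mmin (n r k t s : ℕ) : ℕ :=
  sInf {m | ∃ c : Finset (Fin n) → Fin r, Mcol n r k t s c = m}

section Basics

variable {V : Type*} [DecidableEq V] {t : ℕ} {H : Finset (Finset V)} {e f g : Finset V}

lemma tightStep_symm : TightStep t H e f → TightStep t H f e := by
  rintro ⟨h1, h2, h3⟩; exact ⟨h2, h1, by rwa [inter_comm]⟩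

lemma tightConn_symm : TightConn t H e f → TightConn t H f e :=
  fun h => by
    haveI : Std.Symm (TightStep t H) := ⟨fun _ _ => tightStep_symm⟩
    exact (Relation.ReflTransGen.stdSymm (r := TightStep t H)).symm _ _ h

lemma mem_tightComponent_iff : f ∈ tightComponent t H e ↔ f ∈ H ∧ TightConn t H e f := by
  classical
  simp [tightComponent]

lemma tightComponent_subset : tightComponent t H e ⊆ H := by
  classical
  intro f hf; exact (mem_tightComponent_iff.mp hf).1

lemma mem_tightComponent_self (he : e ∈ H) : e ∈ tightComponent t H e :=
  mem_tightComponent_iff.mpr ⟨he, Relation.ReflTransGen.refl⟩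

lemma tightComponent_eq_of_mem (hf : f ∈ tightComponent t H e) :
    tightComponent t H f = tightComponent t H e := by
  obtain ⟨hfH, hconn⟩ := mem_tightComponent_iff.mp hf
  ext g
  simp only [mem_tightComponent_iff]
  constructor
  · rintro ⟨hg, hc⟩; exact ⟨hg, hconn.trans hc⟩
  · rintro ⟨hg, hc⟩; exact ⟨hg, (tightConn_symm hconn).trans hc⟩

lemma tightStep_of_subset (hef : e ∈ H) (hfH : f ∈ H) {p : Finset V}
    (hpe : p ⊆ e) (hpf : p ⊆ f) (hp : t ≤ p.card) : TightStep t H e f :=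
  ⟨hef, hfH, le_trans hp (card_le_card (subset_inter hpe hpf))⟩

/-- components are equal or disjoint -/
lemma tightComponent_disj (he : e ∈ H) (hf : f ∈ H)
    (hne : tightComponent t H e ≠ tightComponent t H f) :
    Disjoint (tightComponent t H e) (tightComponent t H f) := by
  rw [Finset.disjoint_left]
  intro g hg1 hg2
  exact hne ((tightComponent_eq_of_mem hg1).symm.trans (tightComponent_eq_of_mem hg2))

lemma hShadow_eq_self (h3 : ∀ e ∈ H, e.card = 3) : hShadow 3 H = H := by
  ext f
  simp only [hShadow, mem_biUnion]
  constructor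
  · rintro ⟨e, he, hf⟩
    rw [← h3 e he, powersetCard_self, mem_singleton] at hf
    rwa [hf]
  · intro hf
    exact ⟨f, hf, by rw [← h3 f hf, powersetCard_self, mem_singleton]⟩

end Basics

lemma two_mul_choose_two : ∀ d : ℕ, 2 * d.choose 2 = d * (d - 1)
  | 0 => rfl
  | 1 => rfl
  | (n+2) => by
    rw [Nat.choose_succ_succ, Nat.mul_add, two_mul_choose_two (n+1), Nat.choose_one_right]
    have h1 : (n+2) - 1 = n + 1 := rfl
    have h2 : (n+1) - 1 = n := rfl
    rw [h1, h2]; ring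

lemma real_step' (D y C : ℝ) (hD : 1 ≤ D) (hy : 0 ≤ y) (hC : 2 * C = D * (D - 1))
    (h2 : (D - 1) ^ 2 ≤ 2 * y) :
    C + Real.sqrt (2 * y ^ 3) / 3 ≤ Real.sqrt (2 * (y + D) ^ 3) / 3 := by
  have sa : Real.sqrt (2 * y ^ 3) ^ 2 = 2 * y ^ 3 := Real.sq_sqrt (by positivity)
  have sb : Real.sqrt (2 * y) ^ 2 = 2 * y := Real.sq_sqrt (by positivity)
  have sa0 : 0 ≤ Real.sqrt (2 * y ^ 3) := Real.sqrt_nonneg _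
  have sb0 : 0 ≤ Real.sqrt (2 * y) := Real.sqrt_nonneg _
  have sab : Real.sqrt (2 * y ^ 3) * Real.sqrt (2 * y) = 2 * y ^ 2 := by
    rw [← Real.sqrt_mul (by positivity)]
    have h4 : 2 * y ^ 3 * (2 * y) = (2 * y ^ 2) ^ 2 := by ring
    rw [h4, Real.sqrt_sq (by positivity)]
  have key1 : Real.sqrt (2 * y ^ 3) + (3 / 2) * D * Real.sqrt (2 * y)
      ≤ Real.sqrt (2 * (y + D) ^ 3) := by
    rw [← Real.sqrt_sq (show (0:ℝ) ≤ Real.sqrt (2*y^3) + (3/2)*D*Real.sqrt (2*y) by positivity)]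
    apply Real.sqrt_le_sqrt
    have hexp : (Real.sqrt (2*y^3) + (3/2)*D*Real.sqrt (2*y)) ^ 2
        = Real.sqrt (2*y^3)^2 + 3*D*(Real.sqrt (2*y^3) * Real.sqrt (2*y))
          + (9/4)*D^2*(Real.sqrt (2*y))^2 := by ring
    rw [hexp, sa, sb, sab]
    nlinarith [hy, hD]
  have h6 : D - 1 ≤ Real.sqrt (2 * y) := by
    rw [← Real.sqrt_sq (show (0:ℝ) ≤ D - 1 by linarith)]
    exact Real.sqrt_le_sqrt h2
  have key2 : C ≤ (1/2) * D * Real.sqrt (2 * y) := by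
    have : D * (D - 1) ≤ D * Real.sqrt (2 * y) := by
      apply mul_le_mul_of_nonneg_left h6 (by linarith)
    linarith
  linarith

lemma real_step (d m cd2 : ℕ) (hd : 1 ≤ d) (hdm : d * d + 1 ≤ 2 * m)
    (hc : 2 * cd2 = d * (d - 1)) :
    (cd2 : ℝ) + Real.sqrt (2 * ((m - d : ℕ) : ℝ) ^ 3) / 3 ≤ Real.sqrt (2 * (m : ℝ) ^ 3) / 3 := by
  have hdm' : d ≤ m := by nlinarith
  have hcast : ((m - d : ℕ) : ℝ) = (m : ℝ) - (d : ℝ) := by rw [Nat.cast_sub hdm']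
  have hD1 : (1 : ℝ) ≤ (d:ℝ) := by exact_mod_cast hd
  have hdm2 : (d:ℝ) * (d:ℝ) + 1 ≤ 2 * (m:ℝ) := by exact_mod_cast hdm
  have hcr : 2 * (cd2 : ℝ) = (d:ℝ) * ((d:ℝ) - 1) := by
    have h2 : ((d * (d-1) : ℕ) : ℝ) = (d:ℝ) * ((d:ℝ) - 1) := by
      rw [Nat.cast_mul, Nat.cast_sub hd]; norm_num
    calc 2 * (cd2 : ℝ) = ((2 * cd2 : ℕ) : ℝ) := by push_cast; ring
    _ = (d:ℝ) * ((d:ℝ) - 1) := by rw [hc, h2]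
  have h2y : ((d:ℝ) - 1) ^ 2 ≤ 2 * ((m:ℝ) - (d:ℝ)) := by nlinarith
  have := real_step' (d:ℝ) ((m:ℝ) - (d:ℝ)) (cd2:ℝ) hD1 (by linarith [hdm2] ; ) hcr h2y
  rw [hcast]
  have hyD : ((m:ℝ) - (d:ℝ)) + (d:ℝ) = (m:ℝ) := by ring
  rwa [hyD] at this
section Tri

variable {V : Type*} [DecidableEq V] [Fintype V]

/-- triangles of the graph with edge set `E` -/
noncomputable def triSet (E : Finset (Finset V)) : Finset (Finset V) :=
  (univ.powersetCard 3).filter fun t => t.powersetCard 2 ⊆ E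

lemma triangle_bound (E : Finset (Finset V)) (hE : ∀ e ∈ E, e.card = 2) :
    ((triSet E).card : ℝ) ≤ Real.sqrt (2 * (E.card : ℝ) ^ 3) / 3 := by
  induction E using Finset.strongInductionOn with
  | _ E IH =>
  rcases eq_or_ne E ∅ with rfl | hne
  · have : triSet (∅ : Finset (Finset V)) = ∅ := by
      ext t
      simp only [triSet, mem_filter, mem_powersetCard, Finset.subset_empty,
        Finset.notMem_empty, iff_false, not_and]
      rintro ⟨-, ht3⟩
      intro hsub
      have : (t.powersetCard 2).card = 0 := by rw [hsub]; rfl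
      rw [Finset.card_powersetCard, ht3] at this
      simp at this
    rw [this]
    simp [Real.sqrt_nonneg]
  · -- main case
    classical
    set S : Finset V := E.biUnion id with hS
    have hsub : ∀ e ∈ E, e ⊆ S := fun e he x hx => mem_biUnion.mpr ⟨e, he, hx⟩
    have hdegsum : ∑ v ∈ S, (E.filter (fun e => v ∈ e)).card = 2 * E.card := by
      calc ∑ v ∈ S, (E.filter (fun e => v ∈ e)).card
          = ∑ v ∈ S, ∑ e ∈ E, ite (v ∈ e) 1 0 := by
            refine Finset.sum_congr rfl fun v _ => ?_
            rw [Finset.card_filter]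
        _ = ∑ e ∈ E, ∑ v ∈ S, ite (v ∈ e) 1 0 := Finset.sum_comm
        _ = ∑ e ∈ E, (S.filter (fun v => v ∈ e)).card := by
            refine Finset.sum_congr rfl fun e _ => ?_
            rw [Finset.card_filter]
        _ = ∑ e ∈ E, 2 := by
            refine Finset.sum_congr rfl fun e he => ?_
            rw [Finset.filter_mem_eq_inter, Finset.inter_eq_right.mpr (hsub e he), hE e he]
        _ = 2 * E.card := by rw [Finset.sum_const, smul_eq_mul, mul_comm]
    have hSne : S.Nonempty := by
      obtain ⟨e, he⟩ := Finset.nonempty_iff_ne_empty.mpr hne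
      have : e.card = 2 := hE e he
      obtain ⟨x, hx⟩ := Finset.card_pos.mp (by omega : 0 < e.card)
      exact ⟨x, hsub e he hx⟩
    obtain ⟨v, hvS, hvmin⟩ := S.exists_min_image (fun v => (E.filter (fun e => v ∈ e)).card) hSne
    set d : ℕ := (E.filter (fun e => v ∈ e)).card with hd
    have hdeg1 : ∀ u ∈ S, 1 ≤ (E.filter (fun e => u ∈ e)).card := by
      intro u hu
      obtain ⟨e, he, hue⟩ := mem_biUnion.mp hu
      exact Finset.card_pos.mpr ⟨e, mem_filter.mpr ⟨he, hue⟩⟩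
    have hd1 : 1 ≤ d := hdeg1 v hvS
    have hdS : d * S.card ≤ 2 * E.card := by
      calc d * S.card = ∑ _u ∈ S, d := by rw [Finset.sum_const, smul_eq_mul, mul_comm]
        _ ≤ ∑ u ∈ S, (E.filter (fun e => u ∈ e)).card :=
            Finset.sum_le_sum fun u hu => hvmin u hu
        _ = 2 * E.card := hdegsum
    have hScard : S.card ≤ 2 * E.card := by
      calc S.card = ∑ _u ∈ S, 1 := by simp
        _ ≤ ∑ u ∈ S, (E.filter (fun e => u ∈ e)).card := Finset.sum_le_sum hdeg1
        _ = 2 * E.card := hdegsum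
    -- d ≤ S.card - 1
    have hdlt : d + 1 ≤ S.card := by
      have hinj : d ≤ ((S.erase v).powersetCard 1).card := by
        apply Finset.card_le_card_of_injOn (fun e => e.erase v)
        · intro e he
          rw [mem_coe, mem_filter] at he
          rw [mem_coe, mem_powersetCard]
          constructor
          · intro x hx
            rw [Finset.mem_erase] at hx ⊢
            exact ⟨hx.1, hsub e he.1 hx.2⟩
          · rw [Finset.card_erase_of_mem he.2, hE e he.1]
        · intro e1 h1 e2 h2 heq
          dsimp only at heq
          rw [mem_coe, mem_filter] at h1 h2
          rw [← Finset.insert_erase h1.2, heq, Finset.insert_erase h2.2]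
      rw [Finset.card_powersetCard, Finset.card_erase_of_mem hvS, Nat.choose_one_right] at hinj
      omega
    have hdd : d * d + 1 ≤ 2 * E.card := by
      have h1 : d * (d + 1) ≤ d * S.card := Nat.mul_le_mul_left d hdlt
      have h2 : d * d + d ≤ 2 * E.card := by
        calc d * d + d = d * (d+1) := by ring
          _ ≤ d * S.card := h1
          _ ≤ 2 * E.card := hdS
      calc d * d + 1 ≤ d * d + d := Nat.add_le_add_left hd1 _
        _ ≤ 2 * E.card := h2
    -- split E
    set E' : Finset (Finset V) := E.filter (fun e => v ∉ e) with hE'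
    have hcards : d + E'.card = E.card := by
      rw [hd, hE']
      exact Finset.card_filter_add_card_filter_not (p := fun e => v ∈ e)
    have hE'ss : E' ⊂ E := by
      constructor
      · exact Finset.filter_subset _ _
      · intro hcon
        obtain ⟨e, he⟩ := Finset.card_pos.mp (lt_of_lt_of_le Nat.zero_lt_one hd1)
        rw [mem_filter] at he
        have := hcon he.1
        rw [hE', mem_filter] at this
        exact this.2 he.2
    have IH' := IH E' hE'ss (fun e he => hE e (Finset.filter_subset _ _ he))
    -- count triangles avoiding v
    have havoid : (triSet E).filter (fun t => v ∉ t) ⊆ triSet E' := by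
      intro t ht
      rw [mem_filter] at ht
      obtain ⟨ht1, hvt⟩ := ht
      rw [triSet, mem_filter] at ht1 ⊢
      refine ⟨ht1.1, fun p hp => ?_⟩
      have hpE := ht1.2 hp
      rw [mem_powersetCard] at hp
      rw [hE', mem_filter]
      exact ⟨hpE, fun hvp => hvt (hp.1 hvp)⟩
    -- count triangles through v
    have hthrough : ((triSet E).filter (fun t => v ∈ t)).card ≤ d.choose 2 := by
      set Nv : Finset V := (E.filter (fun e => v ∈ e)).biUnion (fun e => e.erase v) with hNv
      have hNvcard : Nv.card ≤ d := by
        calc Nv.card ≤ ∑ e ∈ E.filter (fun e => v ∈ e), (e.erase v).card :=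
              Finset.card_biUnion_le
          _ = ∑ e ∈ E.filter (fun e => v ∈ e), 1 := by
              refine Finset.sum_congr rfl fun e he => ?_
              rw [mem_filter] at he
              rw [Finset.card_erase_of_mem he.2, hE e he.1]
          _ = d := by simp [hd]
      have hinj2 : ((triSet E).filter (fun t => v ∈ t)).card ≤ (Nv.powersetCard 2).card := by
        apply Finset.card_le_card_of_injOn (fun t => t.erase v)
        · intro t ht
          rw [mem_coe, mem_filter, triSet, mem_filter, mem_powersetCard] at ht
          obtain ⟨⟨⟨htu, ht3⟩, hpairs⟩, hvt⟩ := ht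
          rw [mem_coe, mem_powersetCard]
          constructor
          · intro x hx
            rw [Finset.mem_erase] at hx
            have hpair : ({v, x} : Finset V) ∈ t.powersetCard 2 := by
              rw [mem_powersetCard]
              constructor
              · intro z hz
                rw [Finset.mem_insert, Finset.mem_singleton] at hz
                rcases hz with rfl | rfl
                · exact hvt
                · exact hx.2
              · rw [Finset.card_insert_of_notMem (by simp [Ne.symm hx.1]),
                  Finset.card_singleton]
            have hpairE := hpairs hpair
            rw [hNv, mem_biUnion]
            refine ⟨{v, x}, mem_filter.mpr ⟨hpairE, by simp⟩, ?_⟩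
            rw [Finset.mem_erase]
            exact ⟨hx.1, by simp⟩
          · rw [Finset.card_erase_of_mem hvt, ht3]
        · intro t1 h1 t2 h2 heq
          dsimp only at heq
          rw [mem_coe, mem_filter] at h1 h2
          rw [← Finset.insert_erase h1.2, heq, Finset.insert_erase h2.2]
      calc ((triSet E).filter (fun t => v ∈ t)).card ≤ (Nv.powersetCard 2).card := hinj2
        _ = Nv.card.choose 2 := by rw [Finset.card_powersetCard]
        _ ≤ d.choose 2 := Nat.choose_le_choose 2 hNvcard
    have hsplit : (triSet E).card ≤ d.choose 2 + (triSet E').card := by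
      have := Finset.card_filter_add_card_filter_not
        (s := triSet E) (p := fun t => v ∈ t)
      have h2 := Finset.card_le_card havoid
      omega
    have hfinal := real_step d E.card (d.choose 2) hd1 hdd (two_mul_choose_two d)
    have hE'c : E'.card = E.card - d := by omega
    calc ((triSet E).card : ℝ) ≤ (d.choose 2 : ℝ) + ((triSet E').card : ℝ) := by
          exact_mod_cast hsplit
      _ ≤ (d.choose 2 : ℝ) + Real.sqrt (2 * (E'.card : ℝ) ^ 3) / 3 := by linarith [IH']
      _ = (d.choose 2 : ℝ) + Real.sqrt (2 * ((E.card - d : ℕ) : ℝ) ^ 3) / 3 := by rw [hE'c]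
      _ ≤ Real.sqrt (2 * (E.card : ℝ) ^ 3) / 3 := hfinal

end Tri
section KK
variable {V : Type*} [DecidableEq V] [Fintype V]
lemma comp_eq_of_shadow_overlap {H : Finset (Finset V)} {e1 e2 : Finset V}
    (h1 : e1 ∈ H) (h2 : e2 ∈ H) {p : Finset V} (hp2 : 2 ≤ p.card)
    (hp1 : p ∈ hShadow 2 (tightComponent 2 H e1))
    (hp2' : p ∈ hShadow 2 (tightComponent 2 H e2)) :
    tightComponent 2 H e1 = tightComponent 2 H e2 := by
  obtain ⟨f1, hf1, hpf1⟩ := mem_biUnion.mp hp1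
  obtain ⟨f2, hf2, hpf2⟩ := mem_biUnion.mp hp2'
  rw [mem_powersetCard] at hpf1 hpf2
  have hstep : TightStep 2 H f1 f2 :=
    tightStep_of_subset (tightComponent_subset hf1) (tightComponent_subset hf2)
      hpf1.1 hpf2.1 (by rw [hpf1.2])
  have hconn : TightConn 2 H f1 f2 := Relation.ReflTransGen.single hstep
  have e1f1 : tightComponent 2 H f1 = tightComponent 2 H e1 := tightComponent_eq_of_mem hf1
  have e2f2 : tightComponent 2 H f2 = tightComponent 2 H e2 := tightComponent_eq_of_mem hf2
  have : f2 ∈ tightComponent 2 H f1 :=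
    mem_tightComponent_iff.mpr ⟨tightComponent_subset hf2, hconn⟩
  rw [← e1f1, ← e2f2, tightComponent_eq_of_mem this]

lemma color_bound {n : ℕ} (H : Finset (Finset (Fin n))) (h3 : ∀ e ∈ H, e.card = 3)
    (M : ℕ) (hM : ∀ e ∈ H, (tightComponent 2 H e).card ≤ M) :
    (H.card : ℝ) ≤ ((2/9 : ℝ) * M) ^ ((1:ℝ)/3) * (n.choose 2) := by
  classical
  set P := H.image (tightComponent 2 H) with hP
  have hmemP : ∀ T ∈ P, ∃ e ∈ H, T = tightComponent 2 H e := by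
    intro T hT
    obtain ⟨e, he, hTe⟩ := mem_image.mp hT
    exact ⟨e, he, hTe.symm⟩
  have hcompdisj : ∀ T1 ∈ P, ∀ T2 ∈ P, T1 ≠ T2 → Disjoint T1 T2 := by
    intro T1 h1 T2 h2 hne
    obtain ⟨e1, he1, rfl⟩ := hmemP T1 h1
    obtain ⟨e2, he2, rfl⟩ := hmemP T2 h2
    rw [Finset.disjoint_left]
    intro f hf1 hf2
    exact hne ((tightComponent_eq_of_mem hf1).symm.trans (tightComponent_eq_of_mem hf2))
  have hunion : P.biUnion (fun T => T) = H := by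
    ext f
    simp only [mem_biUnion]
    constructor
    · rintro ⟨T, hT, hfT⟩
      obtain ⟨e, he, rfl⟩ := hmemP T hT
      exact tightComponent_subset hfT
    · intro hf
      exact ⟨tightComponent 2 H f, mem_image_of_mem _ hf, mem_tightComponent_self hf⟩
  have hcardsum : H.card = ∑ T ∈ P, T.card := by
    rw [← hunion, Finset.card_biUnion hcompdisj]
  have hshdisj : ∀ T1 ∈ P, ∀ T2 ∈ P, T1 ≠ T2 → Disjoint (hShadow 2 T1) (hShadow 2 T2) := by
    intro T1 h1 T2 h2 hne
    obtain ⟨e1, he1, rfl⟩ := hmemP T1 h1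
    obtain ⟨e2, he2, rfl⟩ := hmemP T2 h2
    rw [Finset.disjoint_left]
    intro p hp1 hp2
    obtain ⟨f1, hf1, hpf1⟩ := mem_biUnion.mp hp1
    have hpc : p.card = 2 := (mem_powersetCard.mp hpf1).2
    exact hne (comp_eq_of_shadow_overlap he1 he2 (le_of_eq hpc.symm) hp1 hp2)
  have hshsum : ∑ T ∈ P, (hShadow 2 T).card ≤ n.choose 2 := by
    rw [← Finset.card_biUnion hshdisj]
    have : P.biUnion (fun T => hShadow 2 T) ⊆ (univ : Finset (Fin n)).powersetCard 2 := by
      intro p hp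
      obtain ⟨T, hT, hpT⟩ := mem_biUnion.mp hp
      obtain ⟨f, hf, hpf⟩ := mem_biUnion.mp hpT
      rw [mem_powersetCard] at hpf ⊢
      exact ⟨Finset.subset_univ _, hpf.2⟩
    calc (P.biUnion (fun T => hShadow 2 T)).card
        ≤ ((univ : Finset (Fin n)).powersetCard 2).card := Finset.card_le_card this
      _ = n.choose 2 := by rw [Finset.card_powersetCard, Finset.card_univ, Fintype.card_fin]
  set lam : ℝ := ((2/9 : ℝ) * M) ^ ((1:ℝ)/3) with hlam
  have hlam0 : 0 ≤ lam := Real.rpow_nonneg (by positivity) _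
  have hlam3 : lam ^ 3 = (2/9 : ℝ) * M := by
    rw [hlam, ← Real.rpow_natCast (((2/9 : ℝ) * M) ^ ((1:ℝ)/3)) 3, ← Real.rpow_mul (by positivity)]
    norm_num
  have hper : ∀ T ∈ P, (T.card : ℝ) ≤ lam * (hShadow 2 T).card := by
    intro T hT
    obtain ⟨e, he, rfl⟩ := hmemP T hT
    set T := tightComponent 2 H e
    set s : ℕ := (hShadow 2 T).card with hs
    have hTsub : T ⊆ triSet (hShadow 2 T) := by
      intro f hf
      have hfH : f ∈ H := tightComponent_subset hf
      rw [triSet, mem_filter, mem_powersetCard]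
      refine ⟨⟨Finset.subset_univ _, h3 f hfH⟩, fun p hp => ?_⟩
      exact mem_biUnion.mpr ⟨f, hf, hp⟩
    have hsh2 : ∀ p ∈ hShadow 2 T, p.card = 2 := by
      intro p hp
      obtain ⟨f, hf, hpf⟩ := mem_biUnion.mp hp
      exact (mem_powersetCard.mp hpf).2
    have htri := triangle_bound (hShadow 2 T) hsh2
    have hcard1 : (T.card : ℝ) ≤ ((triSet (hShadow 2 T)).card : ℝ) := by
      exact_mod_cast Finset.card_le_card hTsub
    have hx : (T.card : ℝ) ≤ Real.sqrt (2 * (s:ℝ)^3) / 3 := le_trans hcard1 htri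
    have hx2 : 9 * (T.card : ℝ)^2 ≤ 2 * (s:ℝ)^3 := by
      have h3x : 3 * (T.card : ℝ) ≤ Real.sqrt (2 * (s:ℝ)^3) := by linarith
      have := Real.sq_sqrt (show (0:ℝ) ≤ 2*(s:ℝ)^3 by positivity)
      nlinarith [Real.sqrt_nonneg (2*(s:ℝ)^3)]
    have hxM : (T.card : ℝ) ≤ (M : ℝ) := by exact_mod_cast hM e he
    have hcube : (T.card : ℝ)^3 ≤ (lam * s)^3 := by
      have : (T.card : ℝ)^3 = (T.card : ℝ)^2 * (T.card : ℝ) := by ring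
      rw [this]
      have h1 : (T.card : ℝ)^2 * (T.card : ℝ) ≤ (2/9 * (s:ℝ)^3) * (M:ℝ) := by
        apply mul_le_mul (by linarith) hxM (by positivity) (by positivity)
      calc (T.card : ℝ)^2 * (T.card : ℝ) ≤ (2/9 * (s:ℝ)^3) * (M:ℝ) := h1
        _ = (lam)^3 * (s:ℝ)^3 := by rw [hlam3]; ring
        _ = (lam * s)^3 := by ring
    exact (pow_le_pow_iff_left₀ (by positivity) (by positivity) (by norm_num)).mp hcube
  calc (H.card : ℝ) = ∑ T ∈ P, (T.card : ℝ) := by rw [hcardsum]; push_cast; ring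
    _ ≤ ∑ T ∈ P, lam * ((hShadow 2 T).card : ℝ) := Finset.sum_le_sum hper
    _ = lam * ∑ T ∈ P, ((hShadow 2 T).card : ℝ) := by rw [Finset.mul_sum]
    _ ≤ lam * (n.choose 2 : ℝ) := by
        apply mul_le_mul_of_nonneg_left ?_ hlam0
        exact_mod_cast hshsum
    _ = ((2/9 : ℝ) * M) ^ ((1:ℝ)/3) * (n.choose 2) := by rw [hlam]
end KK
section Links
variable {n : ℕ} (c : Finset (Fin n) → Fin 2)

def LinkAdj (i : Fin 2) (v x y : Fin n) : Prop :=
  x ≠ y ∧ x ≠ v ∧ y ≠ v ∧ c {v, x, y} = i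

def Reach (i : Fin 2) (v : Fin n) : Fin n → Fin n → Prop :=
  Relation.ReflTransGen (LinkAdj c i v)

def ConnLink (i : Fin 2) (v : Fin n) : Prop :=
  ∀ x y : Fin n, x ≠ v → y ≠ v → Reach c i v x y

variable {c}

lemma linkAdj_symm {i v x y} (h : LinkAdj c i v x y) : LinkAdj c i v y x := by
  obtain ⟨h1, h2, h3, h4⟩ := h
  refine ⟨h1.symm, h3, h2, ?_⟩
  have hset : ({v, y, x} : Finset (Fin n)) = {v, x, y} := by
    ext z; simp only [Finset.mem_insert, Finset.mem_singleton]; tauto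
  rwa [hset]

lemma reach_symm {i v x y} (h : Reach c i v x y) : Reach c i v y x :=
  by
    haveI : Std.Symm (LinkAdj c i v) := ⟨fun _ _ hh => linkAdj_symm hh⟩
    exact (Relation.ReflTransGen.stdSymm (r := LinkAdj c i v)).symm _ _ h

lemma triple_card {v x y : Fin n} (hxy : x ≠ y) (hxv : x ≠ v) (hyv : y ≠ v) :
    ({v, x, y} : Finset (Fin n)).card = 3 := by
  rw [Finset.card_insert_of_notMem (by simp [hxv.symm, hyv.symm]),
    Finset.card_insert_of_notMem (by simp [hxy]), Finset.card_singleton]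

lemma linkAdj_mem {i v x y} (h : LinkAdj c i v x y) :
    ({v, x, y} : Finset (Fin n)) ∈ colorClass n 2 3 c i := by
  obtain ⟨h1, h2, h3, h4⟩ := h
  rw [colorClass, mem_filter, mem_powersetCard]
  exact ⟨⟨Finset.subset_univ _, triple_card h1 h2 h3⟩, h4⟩

lemma link_dichotomy (hn : 3 ≤ n) (v : Fin n) : ConnLink c 0 v ∨ ConnLink c 1 v := by
  by_contra hcon
  push_neg at hcon
  obtain ⟨h0, h1⟩ := hcon
  rw [ConnLink] at h0 h1
  push_neg at h0 h1
  obtain ⟨x0, y0, hx0, hy0, hr0⟩ := h0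
  obtain ⟨x1, y1, hx1, hy1, hr1⟩ := h1
  -- every non-0-reachable pair gets a 1-edge
  have hcol : ∀ x y : Fin n, x ≠ y → x ≠ v → y ≠ v →
      LinkAdj c 0 v x y ∨ LinkAdj c 1 v x y := by
    intro x y hxy hxv hyv
    rcases Fin.exists_fin_two.mp ⟨c {v,x,y}, rfl⟩ with h | h
    · exact Or.inl ⟨hxy, hxv, hyv, h⟩
    · exact Or.inr ⟨hxy, hxv, hyv, h⟩
  have hx0y0 : x0 ≠ y0 := by
    rintro rfl; exact hr0 Relation.ReflTransGen.refl
  -- claim : all pairs reachable in color 1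
  have main : ∀ u w : Fin n, u ≠ v → w ≠ v → Reach c 1 v u w := by
    have edge1 : ∀ u w : Fin n, u ≠ w → u ≠ v → w ≠ v →
        Reach c 0 v x0 u → ¬ Reach c 0 v x0 w → LinkAdj c 1 v u w := by
      intro u w huw huv hwv hu hw
      rcases hcol u w huw huv hwv with h | h
      · exact absurd (hu.trans (Relation.ReflTransGen.single h)) hw
      · exact h
    intro u w huv hwv
    rcases eq_or_ne u w with rfl | huw
    · exact Relation.ReflTransGen.refl
    by_cases hu : Reach c 0 v x0 u <;> by_cases hw : Reach c 0 v x0 w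
    · -- both reachable : go through y0
      have hy0r : ¬ Reach c 0 v x0 y0 := hr0
      have huy0 : u ≠ y0 := by rintro rfl; exact hy0r hu
      have hwy0 : w ≠ y0 := by rintro rfl; exact hy0r hw
      have e1 : LinkAdj c 1 v u y0 := edge1 u y0 huy0 huv hy0 hu hy0r
      have e2 : LinkAdj c 1 v w y0 := edge1 w y0 hwy0 hwv hy0 hw hy0r
      exact (Relation.ReflTransGen.single e1).trans
        (Relation.ReflTransGen.single (linkAdj_symm e2))
    · exact Relation.ReflTransGen.single (edge1 u w huw huv hwv hu hw)
    · exact Relation.ReflTransGen.single (linkAdj_symm (edge1 w u (Ne.symm huw) hwv huv hw hu))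
    · -- both unreachable : go through x0
      have hux0 : u ≠ x0 := by rintro rfl; exact hu Relation.ReflTransGen.refl
      have hwx0 : w ≠ x0 := by rintro rfl; exact hw Relation.ReflTransGen.refl
      have e1 : LinkAdj c 1 v x0 u := edge1 x0 u (Ne.symm hux0) hx0 huv
        Relation.ReflTransGen.refl hu
      have e2 : LinkAdj c 1 v x0 w := edge1 x0 w (Ne.symm hwx0) hx0 hwv
        Relation.ReflTransGen.refl hw
      exact (Relation.ReflTransGen.single (linkAdj_symm e1)).trans
        (Relation.ReflTransGen.single e2)
  exact hr1 (main x1 y1 hx1 hy1)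

-- chains in the link give tight connectivity
lemma reach_tightConn {i : Fin 2} {v : Fin n} {e : Finset (Fin n)}
    (he : e ∈ colorClass n 2 3 c i) (hve : v ∈ e) {x : Fin n} (hxe : x ∈ e) (hxv : x ≠ v) :
    ∀ z, Reach c i v x z →
      ∀ f ∈ colorClass n 2 3 c i, v ∈ f → z ∈ f →
        TightConn 2 (colorClass n 2 3 c i) e f := by
  have base : ∀ (g f : Finset (Fin n)), g ∈ colorClass n 2 3 c i →
      f ∈ colorClass n 2 3 c i → ∀ w : Fin n, w ≠ v → v ∈ g → w ∈ g → v ∈ f → w ∈ f →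
      TightStep 2 (colorClass n 2 3 c i) g f := by
    intro g f hg hf w hwv hvg hwg hvf hwf
    apply tightStep_of_subset hg hf (p := {v, w})
    · intro z hz; rw [Finset.mem_insert, Finset.mem_singleton] at hz
      rcases hz with rfl | rfl; exacts [hvg, hwg]
    · intro z hz; rw [Finset.mem_insert, Finset.mem_singleton] at hz
      rcases hz with rfl | rfl; exacts [hvf, hwf]
    · rw [Finset.card_insert_of_notMem (by simp [hwv.symm]), Finset.card_singleton]
  intro z hz
  induction hz with
  | refl =>
    intro f hf hvf hxf
    exact Relation.ReflTransGen.single (base e f he hf x hxv hve hxe hvf hxf)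
  | tail hb hadj IH =>
    rename_i z' z
    intro f hf hvf hzf
    have hg : ({v, z', z} : Finset (Fin n)) ∈ colorClass n 2 3 c i := linkAdj_mem hadj
    have hconn1 : TightConn 2 (colorClass n 2 3 c i) e {v, z', z} := by
      exact IH _ hg (by simp) (by simp)
    have hstep : TightStep 2 (colorClass n 2 3 c i) {v, z', z} f := by
      apply base _ _ hg hf z hadj.2.2.1 (by simp) (by simp) hvf hzf
    exact hconn1.trans (Relation.ReflTransGen.single hstep)

lemma exists_two_ne (hn : 3 ≤ n) (v : Fin n) :
    ∃ x y : Fin n, x ≠ y ∧ x ≠ v ∧ y ≠ v := by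
  have hcard : 2 ≤ ((univ : Finset (Fin n)).erase v).card := by
    rw [Finset.card_erase_of_mem (Finset.mem_univ v), Finset.card_univ, Fintype.card_fin]
    omega
  obtain ⟨x, hx, y, hy, hxy⟩ := Finset.one_lt_card.mp (lt_of_lt_of_le one_lt_two hcard)
  rw [Finset.mem_erase] at hx hy
  exact ⟨x, y, hxy, hx.1, hy.1⟩

lemma connLink_triples_conn {i : Fin 2} {v : Fin n} (hn : 3 ≤ n) (hv : ConnLink c i v)
    {e f : Finset (Fin n)} (he : e ∈ colorClass n 2 3 c i) (hf : f ∈ colorClass n 2 3 c i)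
    (hve : v ∈ e) (hvf : v ∈ f) : TightConn 2 (colorClass n 2 3 c i) e f := by
  have hcards : e.card = 3 ∧ f.card = 3 := by
    rw [colorClass, mem_filter, mem_powersetCard] at he hf
    exact ⟨he.1.2, hf.1.2⟩
  have hex : ∃ x ∈ e, x ≠ v := by
    have h2 : (e.erase v).Nonempty := by
      rw [← Finset.card_pos, Finset.card_erase_of_mem hve, hcards.1]; omega
    obtain ⟨x, hx⟩ := h2
    rw [Finset.mem_erase] at hx
    exact ⟨x, hx.2, hx.1⟩
  have hfx : ∃ z ∈ f, z ≠ v := by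
    have h2 : (f.erase v).Nonempty := by
      rw [← Finset.card_pos, Finset.card_erase_of_mem hvf, hcards.2]; omega
    obtain ⟨z, hz⟩ := h2
    rw [Finset.mem_erase] at hz
    exact ⟨z, hz.2, hz.1⟩
  obtain ⟨x, hxe, hxv⟩ := hex
  obtain ⟨z, hzf, hzv⟩ := hfx
  exact reach_tightConn he hve hxe hxv z (hv x z hxv hzv) f hf hvf hzf

/-- there is a triple of color `i` through any link-connected vertex -/
lemma connLink_triple_exists {i : Fin 2} {v : Fin n} (hn : 3 ≤ n) (hv : ConnLink c i v) :
    ∃ e ∈ colorClass n 2 3 c i, v ∈ e := by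
  obtain ⟨x, y, hxy, hxv, hyv⟩ := exists_two_ne hn v
  have hr := hv x y hxv hyv
  rcases (Relation.ReflTransGen.cases_head hr) with rfl | ⟨z, hadj, -⟩
  · exact absurd rfl hxy
  · exact ⟨{v, x, z}, linkAdj_mem hadj, by simp⟩

/-- THE cover lemma -/
lemma cover_lemma (hn : 3 ≤ n) (i : Fin 2) {v0 : Fin n} (hv0 : ConnLink c i v0) :
    ∃ e0 ∈ colorClass n 2 3 c i,
      ∀ f ∈ colorClass n 2 3 c i, (∃ u ∈ f, ConnLink c i u) →
        f ∈ tightComponent 2 (colorClass n 2 3 c i) e0 := by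
  obtain ⟨e0, he0, hv0e0⟩ := connLink_triple_exists hn hv0
  refine ⟨e0, he0, ?_⟩
  rintro f hf ⟨u, huf, hu⟩
  rcases eq_or_ne u v0 with rfl | hne
  · exact mem_tightComponent_iff.mpr ⟨hf, connLink_triples_conn hn hv0 he0 hf hv0e0 huf⟩
  · -- find a triple through both u and v0
    obtain ⟨y, -, hy⟩ : ∃ y : Fin n, y ∈ univ ∧ y ≠ u ∧ y ≠ v0 := by
      have hcard : 0 < (((univ : Finset (Fin n)).erase u).erase v0).card := by
        rw [Finset.card_erase_of_mem, Finset.card_erase_of_mem (Finset.mem_univ u),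
          Finset.card_univ, Fintype.card_fin]
        · omega
        · rw [Finset.mem_erase]; exact ⟨hne.symm, Finset.mem_univ v0⟩
      obtain ⟨y, hy⟩ := Finset.card_pos.mp hcard
      rw [Finset.mem_erase, Finset.mem_erase] at hy
      exact ⟨y, Finset.mem_univ y, hy.2.1, hy.1⟩
    have hr := hv0 u y hne hy.2
    rcases Relation.ReflTransGen.cases_head hr with rfl | ⟨z, hadj, -⟩
    · exact absurd rfl hy.1.symm
    · set h : Finset (Fin n) := {v0, u, z} with hh
      have hhmem : h ∈ colorClass n 2 3 c i := linkAdj_mem hadj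
      have conn1 : TightConn 2 (colorClass n 2 3 c i) e0 h :=
        connLink_triples_conn hn hv0 he0 hhmem hv0e0 (by simp [hh])
      have conn2 : TightConn 2 (colorClass n 2 3 c i) h f :=
        connLink_triples_conn hn hu hhmem hf (by simp [hh]) huf
      exact mem_tightComponent_iff.mpr ⟨hf, conn1.trans conn2⟩

end Links

lemma six_mul_choose_three : ∀ m : ℕ, 6 * m.choose 3 = m * (m - 1) * (m - 2)
  | 0 => rfl
  | 1 => rfl
  | 2 => rfl
  | (m+3) => by
    rw [Nat.choose_succ_succ, Nat.mul_add, six_mul_choose_three (m+2)]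
    have h2 : 6 * (m+2).choose 2 = 3 * ((m+2) * (m+1)) := by
      have := two_mul_choose_two (m+2)
      have h1 : (m+2) - 1 = m + 1 := rfl
      rw [h1] at this
      omega
    rw [h2]
    have e1 : (m+2) - 1 = m+1 := rfl
    have e2 : (m+2) - 2 = m := rfl
    have e3 : (m+3) - 1 = m+2 := rfl
    have e4 : (m+3) - 2 = m+1 := rfl
    rw [e1, e2, e3, e4]; ring

lemma choose_three_le_cube (a : ℕ) : 6 * a.choose 3 ≤ a^3 := by
  rw [six_mul_choose_three]
  calc a * (a-1) * (a-2) ≤ a * a * a :=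
        Nat.mul_le_mul (Nat.mul_le_mul (le_refl a) (Nat.sub_le a 1)) (Nat.sub_le a 2)
    _ = a^3 := by ring

lemma choose_three_lb (m : ℕ) (hm : 2 ≤ m) :
    ((m:ℝ)^3 - 3*(m:ℝ)^2) / 6 ≤ (m.choose 3 : ℝ) := by
  have h := six_mul_choose_three m
  have hc : (6 : ℝ) * (m.choose 3 : ℝ) = (m:ℝ) * ((m:ℝ) - 1) * ((m:ℝ) - 2) := by
    have : ((m * (m-1) * (m-2) : ℕ) : ℝ) = (m:ℝ) * ((m:ℝ)-1) * ((m:ℝ)-2) := by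
      push_cast [Nat.cast_sub (show 1 ≤ m by omega), Nat.cast_sub hm]
      ring
    rw [← this, ← h]; push_cast; ring
  nlinarith [hc, (Nat.cast_nonneg m : (0:ℝ) ≤ (m:ℝ))]

lemma choose_three_ub (m : ℕ) : (m.choose 3 : ℝ) ≤ (m:ℝ)^3 / 6 := by
  have h := choose_three_le_cube m
  have : ((6 * m.choose 3 : ℕ) : ℝ) ≤ ((m^3 : ℕ) : ℝ) := by exact_mod_cast h
  push_cast at this
  linarith

lemma choose_two_ub (m : ℕ) : (m.choose 2 : ℝ) ≤ (m:ℝ)^2 / 2 := by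
  have h := two_mul_choose_two m
  have h2 : m * (m-1) ≤ m^2 := by
    calc m * (m-1) ≤ m * m := Nat.mul_le_mul_left m (Nat.sub_le m 1)
      _ = m^2 := by ring
  have h3 : 2 * m.choose 2 ≤ m^2 := by rw [h]; exact h2
  have : ((2 * m.choose 2 : ℕ) : ℝ) ≤ ((m^2 : ℕ) : ℝ) := by exact_mod_cast h3
  push_cast at this
  linarith

set_option maxHeartbeats 1000000 in
/-- For all sufficiently large `n`, `M(n,2,3,2,3) ≥ 0.24 * C(n,3)`. -/
theorem statement19 :
    ∃ N : ℕ, ∀ n : ℕ, N ≤ n →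
      (0.24 : ℝ) * (n.choose 3 : ℝ) ≤ (Mmin n 2 3 2 3 : ℝ) := by
  classical
  use 10000
  intro n hn
  -- reduce to a fixed coloring
  have hset : {m | ∃ c : Finset (Fin n) → Fin 2, Mcol n 2 3 2 3 c = m}.Nonempty :=
    ⟨Mcol n 2 3 2 3 (fun _ => 0), ⟨fun _ => 0, rfl⟩⟩
  obtain ⟨c, hc⟩ := Nat.sInf_mem hset
  rw [Mmin, ← hc]
  set M : ℕ := Mcol n 2 3 2 3 c with hM
  -- uniformity of color classes
  have huniform : ∀ i : Fin 2, ∀ e ∈ colorClass n 2 3 c i, e.card = 3 := by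
    intro i e he
    rw [colorClass, mem_filter, mem_powersetCard] at he
    exact he.1.2
  -- every tight component has size at most M
  have hcompM : ∀ i : Fin 2, ∀ e ∈ colorClass n 2 3 c i,
      (tightComponent 2 (colorClass n 2 3 c i) e).card ≤ M := by
    intro i e he
    have h3 : ∀ f ∈ tightComponent 2 (colorClass n 2 3 c i) e, f.card = 3 :=
      fun f hf => huniform i f (tightComponent_subset hf)
    have hsh : hShadow 3 (tightComponent 2 (colorClass n 2 3 c i) e)
        = tightComponent 2 (colorClass n 2 3 c i) e := hShadow_eq_self h3
    calc (tightComponent 2 (colorClass n 2 3 c i) e).card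
        = (hShadow 3 (tightComponent 2 (colorClass n 2 3 c i) e)).card := by rw [hsh]
      _ ≤ (colorClass n 2 3 c i).sup (fun e =>
            (hShadow 3 (tightComponent 2 (colorClass n 2 3 c i) e)).card) :=
          Finset.le_sup (f := fun e => (hShadow 3 (tightComponent 2 (colorClass n 2 3 c i) e)).card) he
      _ ≤ M := by
          rw [hM, Mcol]
          exact Finset.le_sup (f := fun j : Fin 2 => (colorClass n 2 3 c j).sup fun e =>
            (hShadow 3 (tightComponent 2 (colorClass n 2 3 c j) e)).card) (Finset.mem_univ i)
  -- R + B = C(n,3)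
  set R : ℕ := (colorClass n 2 3 c 0).card with hR
  set B : ℕ := (colorClass n 2 3 c 1).card with hB
  have hRB : R + B = n.choose 3 := by
    rw [hR, hB, colorClass, colorClass]
    have hfil : (Finset.univ.powersetCard 3).filter (fun e : Finset (Fin n) => c e = 1)
        = (Finset.univ.powersetCard 3).filter (fun e => ¬ (c e = 0)) := by
      apply Finset.filter_congr
      intro e _
      constructor
      · intro h h0; rw [h0] at h; exact absurd h (by decide)
      · intro h
        rcases Fin.exists_fin_two.mp ⟨c e, rfl⟩ with h0 | h1
        · exact absurd h0 h
        · exact h1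
    rw [hfil, Finset.card_filter_add_card_filter_not,
      Finset.card_powersetCard, Finset.card_univ, Fintype.card_fin]
  -- KK-type bound per color
  have hKK : ∀ i : Fin 2, ((colorClass n 2 3 c i).card : ℝ)
      ≤ ((2/9 : ℝ) * M) ^ ((1:ℝ)/3) * (n.choose 2) :=
    fun i => color_bound _ (huniform i) M (hcompM i)
  -- cover bound per color
  set U : Fin 2 → Finset (Fin n) := fun i => Finset.univ.filter (fun v => ConnLink c i v)
    with hU
  have hn3 : 3 ≤ n := by omega
  have hcover : ∀ i : Fin 2, (colorClass n 2 3 c i).card ≤ M + (n - (U i).card).choose 3 := by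
    intro i
    rcases Finset.eq_empty_or_nonempty (U i) with hUe | ⟨v0, hv0⟩
    · rw [hUe]
      simp only [Finset.card_empty, Nat.sub_zero]
      have : (colorClass n 2 3 c i).card ≤ n.choose 3 := by
        have hsub : colorClass n 2 3 c i ⊆ Finset.univ.powersetCard 3 :=
          Finset.filter_subset _ _
        calc (colorClass n 2 3 c i).card ≤ (Finset.univ.powersetCard 3).card :=
              Finset.card_le_card hsub
          _ = n.choose 3 := by
              rw [Finset.card_powersetCard, Finset.card_univ, Fintype.card_fin]
      omega
    · rw [hU] at hv0
      rw [Finset.mem_filter] at hv0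
      obtain ⟨e0, he0, hcov⟩ := cover_lemma hn3 i hv0.2
      have hsplit := Finset.card_filter_add_card_filter_not
        (s := colorClass n 2 3 c i) (p := fun f => ∃ u ∈ f, ConnLink c i u)
      have h1 : ((colorClass n 2 3 c i).filter (fun f => ∃ u ∈ f, ConnLink c i u)).card ≤ M := by
        have hsub : (colorClass n 2 3 c i).filter (fun f => ∃ u ∈ f, ConnLink c i u)
            ⊆ tightComponent 2 (colorClass n 2 3 c i) e0 := by
          intro f hf
          rw [Finset.mem_filter] at hf
          exact hcov f hf.1 hf.2
        calc _ ≤ (tightComponent 2 (colorClass n 2 3 c i) e0).card := Finset.card_le_card hsub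
          _ ≤ M := hcompM i e0 he0
      have h2 : ((colorClass n 2 3 c i).filter (fun f => ¬ ∃ u ∈ f, ConnLink c i u)).card
          ≤ (n - (U i).card).choose 3 := by
        have hsub : (colorClass n 2 3 c i).filter (fun f => ¬ ∃ u ∈ f, ConnLink c i u)
            ⊆ (Finset.univ \ U i).powersetCard 3 := by
          intro f hf
          rw [Finset.mem_filter] at hf
          obtain ⟨hf1, hf2⟩ := hf
          rw [Finset.mem_powersetCard]
          refine ⟨?_, huniform i f hf1⟩
          intro x hx
          rw [Finset.mem_sdiff]
          refine ⟨Finset.mem_univ x, fun hxU => ?_⟩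
          rw [hU, Finset.mem_filter] at hxU
          exact hf2 ⟨x, hx, hxU.2⟩
        calc _ ≤ ((Finset.univ \ U i).powersetCard 3).card := Finset.card_le_card hsub
          _ = (n - (U i).card).choose 3 := by
              rw [Finset.card_powersetCard, Finset.card_sdiff_of_subset (Finset.subset_univ _),
                Finset.card_univ, Fintype.card_fin]
      omega
  -- the two U's cover everything
  have hUcover : n ≤ (U 0).card + (U 1).card := by
    have hsub : (Finset.univ : Finset (Fin n)) ⊆ U 0 ∪ U 1 := by
      intro v _
      rcases link_dichotomy (c := c) hn3 v with h | h
      · exact Finset.mem_union_left _ (Finset.mem_filter.mpr ⟨Finset.mem_univ v, h⟩)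
      · exact Finset.mem_union_right _ (Finset.mem_filter.mpr ⟨Finset.mem_univ v, h⟩)
    calc n = (Finset.univ : Finset (Fin n)).card := by
          rw [Finset.card_univ, Fintype.card_fin]
      _ ≤ (U 0 ∪ U 1).card := Finset.card_le_card hsub
      _ ≤ (U 0).card + (U 1).card := Finset.card_union_le _ _
  -- ===== numeric endgame =====
  by_contra hcon
  push_neg at hcon
  set β : ℕ := n - (U 0).card with hβ
  set α : ℕ := n - (U 1).card with hα
  have hαβ : α + β ≤ n := by
    have h0 : (U 0).card ≤ n := by
      calc (U 0).card ≤ (Finset.univ : Finset (Fin n)).card := Finset.card_le_card (Finset.subset_univ _)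
        _ = n := by rw [Finset.card_univ, Fintype.card_fin]
    have h1 : (U 1).card ≤ n := by
      calc (U 1).card ≤ (Finset.univ : Finset (Fin n)).card := Finset.card_le_card (Finset.subset_univ _)
        _ = n := by rw [Finset.card_univ, Fintype.card_fin]
    omega
  -- real versions
  set nr : ℝ := (n : ℝ) with hnr
  have hnr0 : (10000 : ℝ) ≤ nr := by rw [hnr]; exact_mod_cast hn
  set C3 : ℝ := (n.choose 3 : ℝ) with hC3
  set C2 : ℝ := (n.choose 2 : ℝ) with hC2
  have hC3ub : C3 ≤ nr^3/6 := choose_three_ub n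
  have hC3lb : (nr^3 - 3*nr^2)/6 ≤ C3 := choose_three_lb n (by omega)
  have hC2ub : C2 ≤ nr^2/2 := choose_two_ub n
  have h024 : (0.24 : ℝ) = 6/25 := by norm_num
  have hMub : (M:ℝ) < (6/25) * C3 := by
    rw [h024] at hcon
    exact hcon
  -- lam bound
  set lam : ℝ := ((2/9 : ℝ) * M) ^ ((1:ℝ)/3) with hlam
  have hlam0 : 0 ≤ lam := Real.rpow_nonneg (by positivity) _
  have hlam3 : lam ^ 3 = (2/9 : ℝ) * M := by
    rw [hlam, ← Real.rpow_natCast (((2/9 : ℝ) * M) ^ ((1:ℝ)/3)) 3,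
      ← Real.rpow_mul (by positivity)]
    norm_num
  have hlamub : lam < (21/100) * nr := by
    by_contra hge
    push_neg at hge
    have h3 : ((21/100) * nr)^3 ≤ lam^3 :=
      pow_le_pow_left₀ (by positivity) hge 3
    rw [hlam3] at h3
    nlinarith [hMub, hC3ub, hnr0]
  have hRub : (R:ℝ) < (21/200) * nr^3 := by
    calc (R:ℝ) ≤ lam * C2 := hKK 0
      _ ≤ lam * (nr^2/2) := by
          apply mul_le_mul_of_nonneg_left hC2ub hlam0
      _ < ((21/100) * nr) * (nr^2/2) := by
          apply mul_lt_mul_of_pos_right hlamub (by positivity)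
      _ = (21/200) * nr^3 := by ring
  have hBub : (B:ℝ) < (21/200) * nr^3 := by
    calc (B:ℝ) ≤ lam * C2 := hKK 1
      _ ≤ lam * (nr^2/2) := by
          apply mul_le_mul_of_nonneg_left hC2ub hlam0
      _ < ((21/100) * nr) * (nr^2/2) := by
          apply mul_lt_mul_of_pos_right hlamub (by positivity)
      _ = (21/200) * nr^3 := by ring
  have hRBr : (R:ℝ) + (B:ℝ) = C3 := by rw [hC3]; exact_mod_cast hRB
  -- cover consequences
  have hcovR : (R:ℝ) ≤ (M:ℝ) + (β:ℝ)^3/6 := by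
    have h' : R ≤ M + β.choose 3 := hcover 0
    have hcast : (R:ℝ) ≤ ((M + β.choose 3 : ℕ) : ℝ) := Nat.cast_le.mpr h'
    rw [Nat.cast_add] at hcast
    linarith [choose_three_ub β]
  have hcovB : (B:ℝ) ≤ (M:ℝ) + (α:ℝ)^3/6 := by
    have h' : B ≤ M + α.choose 3 := hcover 1
    have hcast : (B:ℝ) ≤ ((M + α.choose 3 : ℕ) : ℝ) := Nat.cast_le.mpr h'
    rw [Nat.cast_add] at hcast
    linarith [choose_three_ub α]
  have hMub2 : (M:ℝ) < nr^3/25 := by nlinarith [hMub, hC3ub]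

  -- alpha, beta are big
  have hαlb : (13/100)*nr^3 - 3*nr^2 < (α:ℝ)^3 := by
    have hBlb : C3 - (21/200)*nr^3 < (B:ℝ) := by linarith [hRub, hRBr]
    nlinarith [hcovB, hC3lb, hMub2]
  have hβlb : (13/100)*nr^3 - 3*nr^2 < (β:ℝ)^3 := by
    have hRlb : C3 - (21/200)*nr^3 < (R:ℝ) := by linarith [hBub, hRBr]
    nlinarith [hcovR, hC3lb, hMub2]
  -- contradiction via α + β ≤ n
  have hsplit : 2 * α ≤ n ∨ 2 * β ≤ n := by omega
  rcases hsplit with hs | hs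
  · have hsr : (α:ℝ) ≤ nr/2 := by
      have : ((2*α : ℕ) : ℝ) ≤ (n:ℝ) := by exact_mod_cast hs
      push_cast at this; linarith
    have hα0 : (0:ℝ) ≤ (α:ℝ) := Nat.cast_nonneg α
    have hα3 : (α:ℝ)^3 ≤ (nr/2)^3 := pow_le_pow_left₀ hα0 hsr 3
    have hn32 : 10000 * nr^2 ≤ nr^3 := by nlinarith [hnr0, sq_nonneg nr]
    have hcube : (nr/2)^3 = nr^3/8 := by ring
    linarith [hαlb, hα3, hn32, hcube]
  · have hsr : (β:ℝ) ≤ nr/2 := by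
      have : ((2*β : ℕ) : ℝ) ≤ (n:ℝ) := by exact_mod_cast hs
      push_cast at this; linarith
    have hβ0 : (0:ℝ) ≤ (β:ℝ) := Nat.cast_nonneg β
    have hβ3 : (β:ℝ)^3 ≤ (nr/2)^3 := pow_le_pow_left₀ hβ0 hsr 3
    have hn32 : 10000 * nr^2 ≤ nr^3 := by nlinarith [hnr0, sq_nonneg nr]
    have hcube : (nr/2)^3 = nr^3/8 := by ring
    linarith [hβlb, hβ3, hn32, hcube]
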